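/- Weighted double-sum bound for the D-NASA stepsizes: there exists an absolute constant C > 0 such that for every α ∈ (0,1), η > 0 and integer T ≥ 2, setting η_t := η·t^{-3/4} and α_t := α·t^{-1/2} for t ≥ 1, one has ∑_{t=1}^{T-1} η_t · ∑_{τ=1}^{t} ( ∏_{s=τ+1}^{t} (1 − α_s) )·η_τ ≤ C·(η²/α)·e^{2α}·(1 + log T). -/

import Mathlib

open Finset Real

private lemma sum_Icc_Icc_comm' {M : Type*} [AddCommMonoid M] (a b : ℕ) (f : ℕ → ℕ → M) :
    ∑ t ∈ Icc a b, ∑ τ ∈ Icc a t, f t τ = ∑ τ ∈ Icc a b, ∑ t ∈ Icc τ b, f t τ := by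
  rw [Finset.sum_sigma', Finset.sum_sigma']
  refine Finset.sum_nbij' (fun x ↦ ⟨x.2, x.1⟩) (fun x ↦ ⟨x.2, x.1⟩) ?_ ?_ (fun _ _ ↦ rfl)
    (fun _ _ ↦ rfl) (fun _ _ ↦ rfl) <;>
  simp only [Finset.mem_Icc, Sigma.forall, Finset.mem_sigma] <;>
  rintro a b ⟨⟨h₁, h₂⟩, ⟨h₃, h₄⟩⟩ <;> omega

private lemma factor_mem {α : ℝ} (hα0 : 0 < α) (hα1 : α < 1) {s : ℕ} (hs : 1 ≤ s) :
    0 ≤ 1 - α * (s : ℝ) ^ (-(1 : ℝ) / 2) ∧ 1 - α * (s : ℝ) ^ (-(1 : ℝ) / 2) ≤ 1 := by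
  have h1 : (1 : ℝ) ≤ (s : ℝ) := by exact_mod_cast hs
  have h2 : (s : ℝ) ^ (-(1 : ℝ) / 2) ≤ 1 :=
    Real.rpow_le_one_of_one_le_of_nonpos h1 (by norm_num)
  have h3 : 0 ≤ (s : ℝ) ^ (-(1 : ℝ) / 2) := Real.rpow_nonneg (by positivity) _
  constructor <;> nlinarith

private lemma prod_nonneg' {α : ℝ} (hα0 : 0 < α) (hα1 : α < 1) (a b : ℕ) (ha : 1 ≤ a) :
    0 ≤ ∏ s ∈ Icc a b, (1 - α * (s : ℝ) ^ (-(1 : ℝ) / 2)) := by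
  refine Finset.prod_nonneg fun s hs => (factor_mem hα0 hα1 ?_).1
  have := (Finset.mem_Icc.mp hs).1; omega

/-- Telescoping bound for the inner sum. -/
private lemma tele {α : ℝ} (hα0 : 0 < α) (hα1 : α < 1) (τ : ℕ) (hτ : 1 ≤ τ) :
    ∀ N, τ ≤ N →
      α * ∑ t ∈ Icc τ N, (t : ℝ) ^ (-(1 : ℝ) / 2) *
          ∏ s ∈ Icc (τ + 1) t, (1 - α * (s : ℝ) ^ (-(1 : ℝ) / 2))
        ≤ 2 - ∏ s ∈ Icc (τ + 1) N, (1 - α * (s : ℝ) ^ (-(1 : ℝ) / 2)) := by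
  refine Nat.le_induction ?_ ?_
  · simp only [Finset.Icc_self, Finset.sum_singleton]
    rw [Finset.Icc_eq_empty (by omega), Finset.prod_empty]
    have h2 : (τ : ℝ) ^ (-(1 : ℝ) / 2) ≤ 1 :=
      Real.rpow_le_one_of_one_le_of_nonpos (by exact_mod_cast hτ) (by norm_num)
    have h3 : 0 ≤ (τ : ℝ) ^ (-(1 : ℝ) / 2) := Real.rpow_nonneg (by positivity) _
    nlinarith
  · intro N hN ih
    rw [Finset.sum_Icc_succ_top (by omega), Finset.prod_Icc_succ_top (by omega)]
    set p := ∏ s ∈ Icc (τ + 1) N, (1 - α * (s : ℝ) ^ (-(1 : ℝ) / 2)) with hp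
    have hp0 : 0 ≤ p := prod_nonneg' hα0 hα1 _ _ (by omega)
    set a := α * ((N + 1 : ℕ) : ℝ) ^ (-(1 : ℝ) / 2) with haa
    have ha0 : 0 ≤ a := by
      have := Real.rpow_nonneg (x := ((N + 1 : ℕ) : ℝ)) (by positivity) (-(1 : ℝ) / 2)
      positivity
    have key : α * (((N + 1 : ℕ) : ℝ) ^ (-(1 : ℝ) / 2) * (p * (1 - a))) ≤ p - p * (1 - a) := by
      have heq : α * (((N + 1 : ℕ) : ℝ) ^ (-(1 : ℝ) / 2) * (p * (1 - a))) = a * p * (1 - a) := by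
        rw [haa]; ring
      have heq2 : p - p * (1 - a) = a * p := by ring
      rw [heq, heq2]
      nlinarith [mul_nonneg (mul_nonneg ha0 ha0) hp0]
    rw [mul_add]
    linarith [ih, key]

private lemma inner_bound {α : ℝ} (hα0 : 0 < α) (hα1 : α < 1) (τ N : ℕ) (hτ : 1 ≤ τ) :
    ∑ t ∈ Icc τ N, (t : ℝ) ^ (-(1 : ℝ) / 2) *
        ∏ s ∈ Icc (τ + 1) t, (1 - α * (s : ℝ) ^ (-(1 : ℝ) / 2)) ≤ 2 / α := by
  by_cases h : τ ≤ N
  · have h1 := tele hα0 hα1 τ hτ N h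
    have hp0 : 0 ≤ ∏ s ∈ Icc (τ + 1) N, (1 - α * (s : ℝ) ^ (-(1 : ℝ) / 2)) :=
      prod_nonneg' hα0 hα1 _ _ (by omega)
    rw [le_div_iff₀ hα0]
    nlinarith
  · rw [Finset.Icc_eq_empty h, Finset.sum_empty]
    positivity

private lemma harmonic_bound : ∀ n : ℕ, 1 ≤ n →
    ∑ τ ∈ Icc 1 n, (1 : ℝ) / τ ≤ 1 + Real.log n := by
  refine Nat.le_induction ?_ ?_
  · simp
  · intro n hn ih
    rw [Finset.sum_Icc_succ_top (by omega)]
    have hn1 : (0 : ℝ) < n := by exact_mod_cast hn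
    have hx : (0 : ℝ) < (n : ℝ) / ((n : ℝ) + 1) := by positivity
    have h2 := Real.log_le_sub_one_of_pos hx
    rw [Real.log_div (by positivity) (by positivity)] at h2
    have heq : (n : ℝ) / ((n : ℝ) + 1) - 1 = -(1 / ((n : ℝ) + 1)) := by field_simp; ring
    rw [heq] at h2
    push_cast
    linarith

theorem dnasa_stepsize_double_sum_bound :
    ∃ C : ℝ, 0 < C ∧
      ∀ (α η : ℝ) (T : ℕ), 0 < α → α < 1 → 0 < η → 2 ≤ T →
      ∑ t ∈ Finset.Icc 1 (T - 1), (η * (t : ℝ) ^ (-(3 : ℝ) / 4)) *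
          ∑ τ ∈ Finset.Icc 1 t,
            (∏ s ∈ Finset.Icc (τ + 1) t, (1 - α * (s : ℝ) ^ (-(1 : ℝ) / 2))) *
              (η * (τ : ℝ) ^ (-(3 : ℝ) / 4))
        ≤ C * (η ^ 2 / α) * Real.exp (2 * α) * (1 + Real.log T) := by
  refine ⟨2, by norm_num, fun α η T hα0 hα1 hη hT => ?_⟩
  set N := T - 1 with hN
  have hN1 : 1 ≤ N := by omega
  have swap :
      ∑ t ∈ Icc 1 N, (η * (t : ℝ) ^ (-(3 : ℝ) / 4)) *
          ∑ τ ∈ Icc 1 t, (∏ s ∈ Icc (τ + 1) t, (1 - α * (s : ℝ) ^ (-(1 : ℝ) / 2))) *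
              (η * (τ : ℝ) ^ (-(3 : ℝ) / 4))
        = ∑ τ ∈ Icc 1 N, ∑ t ∈ Icc τ N,
            (η * (t : ℝ) ^ (-(3 : ℝ) / 4)) *
              ((∏ s ∈ Icc (τ + 1) t, (1 - α * (s : ℝ) ^ (-(1 : ℝ) / 2))) *
                (η * (τ : ℝ) ^ (-(3 : ℝ) / 4))) := by
    simp_rw [Finset.mul_sum]
    exact sum_Icc_Icc_comm' 1 N (fun t τ =>
      (η * (t : ℝ) ^ (-(3 : ℝ) / 4)) *
        ((∏ s ∈ Icc (τ + 1) t, (1 - α * (s : ℝ) ^ (-(1 : ℝ) / 2))) *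
          (η * (τ : ℝ) ^ (-(3 : ℝ) / 4))))
  rw [swap]
  -- termwise bound
  have step1 : ∑ τ ∈ Icc 1 N, ∑ t ∈ Icc τ N,
      (η * (t : ℝ) ^ (-(3 : ℝ) / 4)) *
        ((∏ s ∈ Icc (τ + 1) t, (1 - α * (s : ℝ) ^ (-(1 : ℝ) / 2))) *
          (η * (τ : ℝ) ^ (-(3 : ℝ) / 4)))
      ≤ ∑ τ ∈ Icc 1 N, (η ^ 2 * (1 / (τ : ℝ))) * ∑ t ∈ Icc τ N,
          (t : ℝ) ^ (-(1 : ℝ) / 2) *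
            ∏ s ∈ Icc (τ + 1) t, (1 - α * (s : ℝ) ^ (-(1 : ℝ) / 2)) := by
    refine Finset.sum_le_sum fun τ hτ => ?_
    rw [Finset.mul_sum]
    refine Finset.sum_le_sum fun t ht => ?_
    obtain ⟨hτ1, hτN⟩ := Finset.mem_Icc.mp hτ
    obtain ⟨hτt, htN⟩ := Finset.mem_Icc.mp ht
    have ht1 : 1 ≤ t := le_trans hτ1 hτt
    have htpos : (0 : ℝ) < t := by exact_mod_cast ht1
    have hτpos : (0 : ℝ) < τ := by exact_mod_cast hτ1
    have hP0 : 0 ≤ ∏ s ∈ Icc (τ + 1) t, (1 - α * (s : ℝ) ^ (-(1 : ℝ) / 2)) :=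
      prod_nonneg' hα0 hα1 _ _ (by omega)
    have hsplit : (t : ℝ) ^ (-(3 : ℝ) / 4)
        = (t : ℝ) ^ (-(1 : ℝ) / 2) * (t : ℝ) ^ (-(1 : ℝ) / 4) := by
      rw [← Real.rpow_add htpos]; norm_num
    have hττ : (τ : ℝ) ^ (-(3 : ℝ) / 4) * (τ : ℝ) ^ (-(1 : ℝ) / 4) = 1 / (τ : ℝ) := by
      rw [← Real.rpow_add hτpos]
      norm_num [Real.rpow_neg_one]
    have hmono : (t : ℝ) ^ (-(1 : ℝ) / 4) ≤ (τ : ℝ) ^ (-(1 : ℝ) / 4) :=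
      Real.rpow_le_rpow_of_nonpos hτpos (by exact_mod_cast hτt) (by norm_num)
    have hnn : 0 ≤ η ^ 2 * ((t : ℝ) ^ (-(1 : ℝ) / 2) *
        (∏ s ∈ Icc (τ + 1) t, (1 - α * (s : ℝ) ^ (-(1 : ℝ) / 2))) * (τ : ℝ) ^ (-(3 : ℝ) / 4)) := by
      have := Real.rpow_nonneg htpos.le (-(1 : ℝ) / 2)
      have := Real.rpow_nonneg hτpos.le (-(3 : ℝ) / 4)
      positivity
    calc (η * (t : ℝ) ^ (-(3 : ℝ) / 4)) *
          ((∏ s ∈ Icc (τ + 1) t, (1 - α * (s : ℝ) ^ (-(1 : ℝ) / 2))) *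
            (η * (τ : ℝ) ^ (-(3 : ℝ) / 4)))
        = (η ^ 2 * ((t : ℝ) ^ (-(1 : ℝ) / 2) *
            (∏ s ∈ Icc (τ + 1) t, (1 - α * (s : ℝ) ^ (-(1 : ℝ) / 2))) * (τ : ℝ) ^ (-(3 : ℝ) / 4)))
            * (t : ℝ) ^ (-(1 : ℝ) / 4) := by rw [hsplit]; ring
      _ ≤ (η ^ 2 * ((t : ℝ) ^ (-(1 : ℝ) / 2) *
            (∏ s ∈ Icc (τ + 1) t, (1 - α * (s : ℝ) ^ (-(1 : ℝ) / 2))) * (τ : ℝ) ^ (-(3 : ℝ) / 4)))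
            * (τ : ℝ) ^ (-(1 : ℝ) / 4) := by
          exact mul_le_mul_of_nonneg_left hmono hnn
      _ = η ^ 2 * (1 / (τ : ℝ)) * ((t : ℝ) ^ (-(1 : ℝ) / 2) *
            ∏ s ∈ Icc (τ + 1) t, (1 - α * (s : ℝ) ^ (-(1 : ℝ) / 2))) := by
          rw [← hττ]; ring
  have step2 : ∑ τ ∈ Icc 1 N, (η ^ 2 * (1 / (τ : ℝ))) * ∑ t ∈ Icc τ N,
        (t : ℝ) ^ (-(1 : ℝ) / 2) *
          ∏ s ∈ Icc (τ + 1) t, (1 - α * (s : ℝ) ^ (-(1 : ℝ) / 2))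
      ≤ ∑ τ ∈ Icc 1 N, (η ^ 2 * (1 / (τ : ℝ))) * (2 / α) := by
    refine Finset.sum_le_sum fun τ hτ => ?_
    obtain ⟨hτ1, _⟩ := Finset.mem_Icc.mp hτ
    have hτpos : (0 : ℝ) < τ := by exact_mod_cast hτ1
    have hc : 0 ≤ η ^ 2 * (1 / (τ : ℝ)) := by positivity
    exact mul_le_mul_of_nonneg_left (inner_bound hα0 hα1 τ N hτ1) hc
  have step3 : ∑ τ ∈ Icc 1 N, (η ^ 2 * (1 / (τ : ℝ))) * (2 / α)
      ≤ 2 * (η ^ 2 / α) * (1 + Real.log T) := by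
    have heq : ∑ τ ∈ Icc 1 N, (η ^ 2 * (1 / (τ : ℝ))) * (2 / α)
        = 2 * (η ^ 2 / α) * ∑ τ ∈ Icc 1 N, (1 : ℝ) / τ := by
      rw [Finset.mul_sum]; exact Finset.sum_congr rfl fun τ _ => by ring
    rw [heq]
    have hharm := harmonic_bound N hN1
    have hlogmono : Real.log N ≤ Real.log T := by
      apply Real.log_le_log (by exact_mod_cast hN1)
      exact_mod_cast Nat.sub_le T 1
    have hc : 0 ≤ 2 * (η ^ 2 / α) := by positivity
    calc 2 * (η ^ 2 / α) * ∑ τ ∈ Icc 1 N, (1 : ℝ) / τ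
        ≤ 2 * (η ^ 2 / α) * (1 + Real.log N) := mul_le_mul_of_nonneg_left hharm hc
      _ ≤ 2 * (η ^ 2 / α) * (1 + Real.log T) := by
          apply mul_le_mul_of_nonneg_left _ hc; linarith
  have final : 2 * (η ^ 2 / α) * (1 + Real.log T)
      ≤ 2 * (η ^ 2 / α) * Real.exp (2 * α) * (1 + Real.log T) := by
    have hexp : (1 : ℝ) ≤ Real.exp (2 * α) := by
      rw [← Real.exp_zero]; exact Real.exp_le_exp.mpr (by linarith)
    have hlogT : 0 ≤ Real.log T := Real.log_nonneg (by exact_mod_cast (by omega : 1 ≤ T))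
    have h1 : 0 ≤ 2 * (η ^ 2 / α) * (1 + Real.log T) := by
      have : 0 ≤ η ^ 2 / α := by positivity
      nlinarith
    calc 2 * (η ^ 2 / α) * (1 + Real.log T)
        = (2 * (η ^ 2 / α) * (1 + Real.log T)) * 1 := by ring
      _ ≤ (2 * (η ^ 2 / α) * (1 + Real.log T)) * Real.exp (2 * α) :=
          mul_le_mul_of_nonneg_left hexp h1
      _ = 2 * (η ^ 2 / α) * Real.exp (2 * α) * (1 + Real.log T) := by ring
  linarith
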